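/- For all positive reals a, s, t, one has inf over nonnegative integers m of (s/(ae))^{ms} · m^{ms} / t^m ≤ e^{es/2} · e^{−a t^{1/s}}. -/

import Mathlib

/-- For all positive reals `a, s, t`:
`inf_{m ∈ ℕ} (s/(ae))^{ms} m^{ms} / t^m ≤ e^{es/2} e^{−a t^{1/s}}`. -/
theorem stmt_13 (a s t : ℝ) (ha : 0 < a) (hs : 0 < s) (ht : 0 < t) :
    (⨅ m : ℕ, (s / (a * Real.exp 1)) ^ ((m : ℝ) * s) *
        (m : ℝ) ^ ((m : ℝ) * s) / t ^ m) ≤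
      Real.exp (Real.exp 1 * s / 2) * Real.exp (-a * t ^ (1 / s)) := by
  have he : (0:ℝ) < Real.exp 1 := Real.exp_pos 1
  have he2 : (2:ℝ) ≤ Real.exp 1 := by
    have := Real.add_one_le_exp (1:ℝ); linarith
  have ht1s : 0 < t ^ (1/s) := Real.rpow_pos_of_pos ht _
  set r : ℝ := a * t ^ (1/s) / s with hrdef
  have hr : 0 < r := by positivity
  have hsr : s * r = a * t ^ (1/s) := by
    rw [hrdef]; field_simp [hs.ne']
  have hRHS : Real.exp (Real.exp 1 * s / 2) * Real.exp (-a * t ^ (1/s))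
      = Real.exp (Real.exp 1 * s / 2 - s * r) := by
    rw [← Real.exp_add, hsr]; ring_nf
  set m : ℕ := ⌊r⌋₊ with hm
  have hbdd : BddBelow (Set.range fun m : ℕ =>
      (s / (a * Real.exp 1)) ^ ((m : ℝ) * s) * (m : ℝ) ^ ((m : ℝ) * s) / t ^ m) := by
    refine ⟨0, ?_⟩
    rintro x ⟨n, rfl⟩
    positivity
  refine le_trans (ciInf_le hbdd m) ?_
  rw [hRHS]
  by_cases hm0 : m = 0
  · have hr1 : r < 1 := by
      by_contra h
      push_neg at h
      have : 1 ≤ ⌊r⌋₊ := Nat.le_floor (by simpa using h)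
      omega
    simp only [hm0, Nat.cast_zero, zero_mul, Real.rpow_zero, pow_zero, mul_one,
      div_one]
    rw [Real.one_le_exp_iff]
    nlinarith
  · have hmr : (m:ℝ) ≤ r := Nat.floor_le hr.le
    have hm1 : (1:ℝ) ≤ (m:ℝ) := by
      exact_mod_cast Nat.one_le_iff_ne_zero.mpr hm0
    have hrm : r < (m:ℝ) + 1 := Nat.lt_floor_add_one r
    have htm : (t:ℝ) ^ m = (t ^ (1/s)) ^ ((m:ℝ) * s) := by
      rw [← Real.rpow_natCast t m, ← Real.rpow_mul ht.le]
      congr 1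
      field_simp
    have key : (s / (a * Real.exp 1)) ^ ((m : ℝ) * s) * (m : ℝ) ^ ((m : ℝ) * s) / t ^ m
        = ((m:ℝ) / (Real.exp 1 * r)) ^ ((m:ℝ)*s) := by
      rw [htm, ← Real.mul_rpow (by positivity) (Nat.cast_nonneg m),
        ← Real.div_rpow (by positivity) (Real.rpow_nonneg ht.le _)]
      congr 1
      rw [hrdef]
      field_simp
    rw [key]
    have hbase : (0:ℝ) < (m:ℝ)/(Real.exp 1 * r) := by positivity
    rw [Real.rpow_def_of_pos hbase, Real.exp_le_exp]
    have hlog : Real.log ((m:ℝ)/(Real.exp 1 * r)) ≤ -1 := by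
      rw [Real.log_le_iff_le_exp hbase, Real.exp_neg, div_le_iff₀ (by positivity)]
      have hx : (Real.exp 1)⁻¹ * (Real.exp 1 * r) = r := by field_simp
      linarith
    have hms : (0:ℝ) < (m:ℝ) * s := by positivity
    calc Real.log ((m:ℝ)/(Real.exp 1 * r)) * ((m:ℝ)*s)
        ≤ -1 * ((m:ℝ)*s) := mul_le_mul_of_nonneg_right hlog hms.le
      _ ≤ Real.exp 1 * s / 2 - s * r := by nlinarith
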